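/- Let T be a probability distribution on X × Y with marginal T_X, and fix ε > 0, p ≥ 1 (all relevant integrands measurable and integrable). Then for every pair of score functions f, f* : X → ℝ^C: R^{rob}_T(f) ≤ disp^{rob}_{T_X}(f*, f) + R_T(f*). -/
import Mathlib


noncomputable section
open MeasureTheory Finset Set

namespace RobustUDA

/-- The input space: `ℝ^d`. -/
abbrev Inp (d : ℕ) := Fin d → ℝ

variable {d C : ℕ}

/-- `ℓ_p`-norm of a vector in `ℝ^d`. -/
def pnorm (p : ℝ) (v : Inp d) : ℝ := (∑ i, |v i| ^ p) ^ (1 / p)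

/-- The `ε`-ball centered at `x` in the `ℓ_p`-norm. -/
def ball (p ε : ℝ) (x : Inp d) : Set (Inp d) := {x' | pnorm p (fun i => x i - x' i) ≤ ε}

open Classical in
/-- Indicator function of a proposition, real valued. -/
def ind (P : Prop) : ℝ := if P then 1 else 0

/-- The ramp function `Φ_ρ`. -/
def ramp (ρ t : ℝ) : ℝ := if t ≤ 0 then 1 else if t ≤ ρ then 1 - t / ρ else 0

/-- The margin `M_f(x,y) = f_y(x) - max_{y' ≠ y} f_{y'}(x)`. -/
def margin (f : Inp d → Fin C → ℝ) (x : Inp d) (y : Fin C) : ℝ :=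
  f x y - sSup (f x '' {y' | y' ≠ y})

/-- Standard (0-1) risk of a classifier `hf` on a distribution `D` on `X × Y`. -/
def stdRisk (D : Measure (Inp d × Fin C)) (hf : Inp d → Fin C) : ℝ :=
  ∫ z, ind (z.2 ≠ hf z.1) ∂D

/-- Robust (0-1) risk of a classifier `hf`. -/
def robustRisk (p ε : ℝ) (D : Measure (Inp d × Fin C)) (hf : Inp d → Fin C) : ℝ :=
  ∫ z, sSup ((fun x' => ind (z.2 ≠ hf x')) '' ball p ε z.1) ∂D

/-- Margin risk `R^{(ρ)}_D(f)`. -/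
def marginRisk (ρ : ℝ) (D : Measure (Inp d × Fin C)) (f : Inp d → Fin C → ℝ) : ℝ :=
  ∫ z, ramp ρ (margin f z.1 z.2) ∂D

/-- Robust margin risk `R^{rob,(ρ)}_D(f)`. -/
def robustMarginRisk (p ε ρ : ℝ) (D : Measure (Inp d × Fin C)) (f : Inp d → Fin C → ℝ) : ℝ :=
  ∫ z, sSup ((fun x' => ramp ρ (margin f x' z.2)) '' ball p ε z.1) ∂D

/-- Margin disparity `disp^{(ρ)}_{D_X}(f', f)`, where `hf'` is the classifier induced by `f'`. -/
def marginDisp (ρ : ℝ) (DX : Measure (Inp d)) (hf' : Inp d → Fin C)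
    (f : Inp d → Fin C → ℝ) : ℝ :=
  ∫ x, ramp ρ (margin f x (hf' x)) ∂DX

/-- 0-1 robust disparity `disp^{rob}_{D_X}(f', f)`. -/
def robDisp (p ε : ℝ) (DX : Measure (Inp d)) (hf' hf : Inp d → Fin C) : ℝ :=
  ∫ x, sSup ((fun x' => ind (hf' x ≠ hf x')) '' ball p ε x) ∂DX

/-- Robust margin disparity `disp^{rob,(ρ)}_{D_X}(f', f)`. -/
def robMarginDisp (p ε ρ : ℝ) (DX : Measure (Inp d)) (hf' : Inp d → Fin C)
    (f : Inp d → Fin C → ℝ) : ℝ :=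
  ∫ x, sSup ((fun x' => ramp ρ (margin f x' (hf' x))) '' ball p ε x) ∂DX

/-- Point-wise local Lipschitz constant `L_f(x, ε)` (w.r.t. the `ℓ_p` ball and `ℓ₁` output norm). -/
def locLip (p ε : ℝ) (f : Inp d → Fin C → ℝ) (x : Inp d) : ℝ :=
  sSup ((fun x' => (∑ c, |f x' c - f x c|) / pnorm p (fun i => x' i - x i)) ''
    {x' | x' ∈ ball p ε x ∧ x' ≠ x})

/-- Topological support of a measure on the input space. -/
def msupport (μ : Measure (Inp d)) : Set (Inp d) :=
  {x | ∀ U : Set (Inp d), IsOpen U → x ∈ U → 0 < μ U}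

/-- Local Lipschitz constant `L_f(D_X, ε)` over the support of `D_X`. -/
def locLipOn (p ε : ℝ) (f : Inp d → Fin C → ℝ) (μ : Measure (Inp d)) : ℝ :=
  sSup (locLip p ε f '' msupport μ)

/-- Robust margin disparity discrepancy `d^{rob,(ρ)}_{f,F}(S_X, T_X)` where `cl` assigns
to each score function its induced classifier. -/
def discrepancy (p ε ρ : ℝ) (F : Set (Inp d → Fin C → ℝ))
    (cl : (Inp d → Fin C → ℝ) → Inp d → Fin C)
    (SX TX : Measure (Inp d)) (f : Inp d → Fin C → ℝ) : ℝ :=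
  sSup ((fun f' => robMarginDisp p ε ρ TX (cl f') f - marginDisp ρ SX (cl f') f) '' F)

/-- The class `Π₁F` of component functions of score functions in `F`. -/
def Pi1 (F : Set (Inp d → Fin C → ℝ)) : Set (Inp d → ℝ) :=
  {g | ∃ f ∈ F, ∃ y : Fin C, g = fun x => f x y}

/-- The class `Π_H F` where `H = {h_f : f ∈ F}` is given by the classifier assignment `cl`. -/
def PiH (F : Set (Inp d → Fin C → ℝ)) (cl : (Inp d → Fin C → ℝ) → Inp d → Fin C) :
    Set (Inp d → ℝ) :=
  {g | ∃ f ∈ F, ∃ f' ∈ F, g = fun x => f x (cl f' x)}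

/-- Rademacher complexity `ℜ_{n,D}(G)` of a class `G` of real functions on `Z`. -/
def rademacher (n : ℕ) {Z : Type*} [MeasurableSpace Z] (D : Measure Z) (G : Set (Z → ℝ)) : ℝ :=
  ∫ z : Fin n → Z, ∫ σ : Fin n → Bool,
      sSup ((fun g => (n : ℝ)⁻¹ * ∑ i, (if σ i then (1 : ℝ) else -1) * g (z i)) '' G)
    ∂(Measure.pi fun _ => (PMF.uniformOfFintype Bool).toMeasure) ∂(Measure.pi fun _ => D)


/-- For every pair of score functions `f, f*`:
`R^{rob}_T(f) ≤ disp^{rob}_{T_X}(f*, f) + R_T(f*)`. -/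
theorem robustRisk_le_robDisp_add_stdRisk {d C : ℕ}
    (ε p : ℝ) (hε : 0 < ε) (hp : 1 ≤ p)
    (T : Measure (Inp d × Fin C)) [IsProbabilityMeasure T]
    (f fs : Inp d → Fin C → ℝ) (hf hfs : Inp d → Fin C)
    (hcl : ∀ x y, f x y ≤ f x (hf x))
    (hcls : ∀ x y, fs x y ≤ fs x (hfs x))
    (hint1 : Integrable (fun z => sSup ((fun x' => ind (z.2 ≠ hf x')) '' ball p ε z.1)) T)
    (hint2 : Integrable
      (fun x => sSup ((fun x' => ind (hfs x ≠ hf x')) '' ball p ε x)) (T.map Prod.fst))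
    (hint3 : Integrable (fun z => ind (z.2 ≠ hfs z.1)) T) :
    robustRisk p ε T hf ≤ robDisp p ε (T.map Prod.fst) hfs hf + stdRisk T hfs := by
  have hp0 : p ≠ 0 := by linarith
  have hmem : ∀ x : Inp d, x ∈ ball p ε x := by
    intro x
    simp only [ball, Set.mem_setOf_eq, pnorm, sub_self, abs_zero]
    rw [Real.zero_rpow hp0]
    simp only [Finset.sum_const, smul_zero]
    rw [Real.zero_rpow (by positivity : (1:ℝ)/p ≠ 0)]
    linarith
  have hindmem : ∀ P : Prop, ind P = 0 ∨ ind P = 1 := by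
    intro P; unfold ind; by_cases h : P <;> simp [h]
  have hind0 : ∀ P : Prop, (0:ℝ) ≤ ind P := by
    intro P; rcases hindmem P with h | h <;> rw [h] <;> norm_num
  have hind1 : ∀ P : Prop, ind P ≤ 1 := by
    intro P; rcases hindmem P with h | h <;> rw [h] <;> norm_num
  have hbdd : ∀ (x : Inp d) (Q : Inp d → Prop),
      BddAbove ((fun x' => ind (Q x')) '' ball p ε x) := by
    intro x Q
    refine ⟨1, ?_⟩
    rintro r ⟨x', _, rfl⟩
    exact hind1 _
  set g : Inp d → ℝ := fun x => sSup ((fun x' => ind (hfs x ≠ hf x')) '' ball p ε x) with hg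
  have key : ∀ z : Inp d × Fin C,
      sSup ((fun x' => ind (z.2 ≠ hf x')) '' ball p ε z.1)
        ≤ g z.1 + ind (z.2 ≠ hfs z.1) := by
    intro z
    by_cases h : z.2 = hfs z.1
    · have : ind (z.2 ≠ hfs z.1) = 0 := by simp [ind, h]
      rw [this, add_zero, hg, h]
    · have h1 : ind (z.2 ≠ hfs z.1) = 1 := by simp [ind, h]
      rw [h1]
      have hA : sSup ((fun x' => ind (z.2 ≠ hf x')) '' ball p ε z.1) ≤ 1 := by
        apply csSup_le ⟨_, Set.mem_image_of_mem _ (hmem z.1)⟩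
        rintro r ⟨x', _, rfl⟩
        exact hind1 _
      have hB : (0:ℝ) ≤ g z.1 := by
        refine le_trans (hind0 (hfs z.1 ≠ hf z.1)) ?_
        exact le_csSup (hbdd _ _) (Set.mem_image_of_mem _ (hmem z.1))
      linarith
  have hgm : AEStronglyMeasurable g (T.map Prod.fst) := hint2.aestronglyMeasurable
  have hgfst : Integrable (fun z : Inp d × Fin C => g z.1) T := by
    have := (integrable_map_measure hgm measurable_fst.aemeasurable).mp hint2
    exact this
  calc robustRisk p ε T hf
      ≤ ∫ z, (g z.1 + ind (z.2 ≠ hfs z.1)) ∂T := integral_mono hint1 (hgfst.add hint3) key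
    _ = (∫ z, g z.1 ∂T) + ∫ z, ind (z.2 ≠ hfs z.1) ∂T := integral_add hgfst hint3
    _ = robDisp p ε (T.map Prod.fst) hfs hf + stdRisk T hfs := by
        rw [robDisp, stdRisk, integral_map measurable_fst.aemeasurable hgm]

end RobustUDA
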